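/- Assume c_i(I) < ∞ for i = 0,...,d-1, where d = dim S/I. Then the reduction number of S/I with respect to z = x_n,...,x_{n-d+1} equals r(I); that is, max{ r : (S/(I,x_n,...,x_{n-d+1}))_r ≠ 0 } = max{ r : (S_d/J_d)_r ≠ 0 }. -/

import Mathlib

open MvPolynomial

noncomputable section

/-- Coercion of a natural number into `WithBot ℕ∞` (degrees, with `⊥ = -∞`, `⊤ = ∞`). -/
def natW (r : ℕ) : WithBot ℕ∞ := ((r : ℕ∞) : WithBot ℕ∞)

/-- The total degree `|a|` of an exponent vector. -/
def degOf {n : ℕ} (a : Fin n →₀ ℕ) : ℕ := a.sum fun _ e => e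

variable {k : Type*} [Field k] {n : ℕ}

/-- The top degree in which the graded pieces of two ideals differ
(`⊥` if they never differ, `⊤` if they differ in unboundedly many degrees). -/
def topDiff (I J : Ideal (MvPolynomial (Fin n) k)) : WithBot ℕ∞ :=
  sSup {x | ∃ r : ℕ, x = natW r ∧
    ¬ ∀ f : MvPolynomial (Fin n) k, f.IsHomogeneous r → (f ∈ I ↔ f ∈ J)}

/-- `I` is a homogeneous (graded) ideal. -/
def HomogIdeal (I : Ideal (MvPolynomial (Fin n) k)) : Prop :=
  ∀ f ∈ I, ∀ r : ℕ, homogeneousComponent r f ∈ I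

/-- The maximal homogeneous ideal `𝔪 = (x₁, …, xₙ)`. -/
def maxIdl (k : Type*) [Field k] (n : ℕ) : Ideal (MvPolynomial (Fin n) k) :=
  Ideal.span (Set.range X)

/-- The ideal `(I, z₁, …, z_i)`. -/
def partIdeal (I : Ideal (MvPolynomial (Fin n) k)) {m : ℕ}
    (z : Fin m → MvPolynomial (Fin n) k) (i : ℕ) : Ideal (MvPolynomial (Fin n) k) :=
  I ⊔ Ideal.span (z '' {j : Fin m | (j : ℕ) < i})

/-- `a_z^i(S/I) = sup { r : [(I,z₁,…,z_i) : z_{i+1}]_r ≠ (I,z₁,…,z_i)_r }`. -/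
def aInv (I : Ideal (MvPolynomial (Fin n) k)) {m : ℕ}
    (z : Fin m → MvPolynomial (Fin n) k) (i : Fin m) : WithBot ℕ∞ :=
  topDiff ((partIdeal I z (i : ℕ)).colon (Ideal.span {z i})) (partIdeal I z (i : ℕ))

/-- `z` is a filter-regular sequence for `S/I`: each `z_{i+1}` avoids every associated
prime of `(I,z₁,…,z_i)` other than the maximal homogeneous ideal. -/
def FilterRegular (I : Ideal (MvPolynomial (Fin n) k)) {m : ℕ}
    (z : Fin m → MvPolynomial (Fin n) k) : Prop :=
  ∀ i : Fin m, ∀ p : Ideal (MvPolynomial (Fin n) k),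
    IsAssociatedPrime p (MvPolynomial (Fin n) k ⧸ partIdeal I z (i : ℕ)) →
    p ≠ maxIdl k n → z i ∉ p

/-- The saturation `⋃_{m ≥ 1} (J : z^m)`. -/
def satIdeal (J : Ideal (MvPolynomial (Fin n) k)) (z : MvPolynomial (Fin n) k) :
    Ideal (MvPolynomial (Fin n) k) :=
  ⨆ m : ℕ, J.colon (Ideal.span {z ^ (m + 1)})

/-- `a <_drevlex b` for the degree reverse lexicographic order with `x₁ > x₂ > … > xₙ`. -/
def RevLexLT {n : ℕ} (a b : Fin n →₀ ℕ) : Prop :=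
  degOf a < degOf b ∨
    (degOf a = degOf b ∧ ∃ j : Fin n, b j < a j ∧ ∀ l : Fin n, j < l → a l = b l)

/-- The initial ideal of `I` with respect to the reverse lexicographic order:
the ideal generated by the leading monomials of the nonzero elements of `I`. -/
def initialIdeal (I : Ideal (MvPolynomial (Fin n) k)) : Ideal (MvPolynomial (Fin n) k) :=
  Ideal.span {g | ∃ f ∈ I, f ≠ 0 ∧ ∃ μ ∈ f.support,
    (∀ ν ∈ f.support, ν = μ ∨ RevLexLT ν μ) ∧ g = monomial μ (1 : k)}

/-- The evaluation `x_{n-i+1} = ⋯ = x_n = 0`. -/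
def evalZero (k : Type*) [Field k] (n i : ℕ) :
    MvPolynomial (Fin n) k →ₐ[k] MvPolynomial (Fin n) k :=
  aeval fun j : Fin n => if (j : ℕ) < n - i then X j else 0

/-- The evaluation `x_{n-i+1} = ⋯ = x_n = 0`, `x_{n-i} = 1`. -/
def evalOne (k : Type*) [Field k] (n i : ℕ) :
    MvPolynomial (Fin n) k →ₐ[k] MvPolynomial (Fin n) k :=
  aeval fun j : Fin n =>
    if (j : ℕ) < n - i - 1 then X j else if (j : ℕ) = n - i - 1 then 1 else 0

/-- `J_i`: the ideal obtained from `In(I)` by evaluating `x_{n-i+1} = ⋯ = x_n = 0`. -/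
def Jlow (i : ℕ) (I : Ideal (MvPolynomial (Fin n) k)) : Ideal (MvPolynomial (Fin n) k) :=
  Ideal.map (evalZero k n i) (initialIdeal I)

/-- `J̃_i`: the ideal obtained from `J_i` by the further evaluation `x_{n-i} = 1`. -/
def Jtil (i : ℕ) (I : Ideal (MvPolynomial (Fin n) k)) : Ideal (MvPolynomial (Fin n) k) :=
  Ideal.map (evalOne k n i) (initialIdeal I)

/-- `c_i(I) = sup { r : (J̃_i/J_i)_r ≠ 0 }`, computed in `S_i = k[x₁,…,x_{n-i}]`. -/
def cInv (i : ℕ) (I : Ideal (MvPolynomial (Fin n) k)) : WithBot ℕ∞ :=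
  sSup {x | ∃ r : ℕ, x = natW r ∧ ∃ f : MvPolynomial (Fin n) k,
    f ∈ Jtil i I ∧ f ∈ supported k {j : Fin n | (j : ℕ) < n - i} ∧
    f.IsHomogeneous r ∧ f ∉ Jlow i I}

/-- `r(I) = sup { r : (S_d/J_d)_r ≠ 0 }`. -/
def rInv (d : ℕ) (I : Ideal (MvPolynomial (Fin n) k)) : WithBot ℕ∞ :=
  sSup {x | ∃ r : ℕ, x = natW r ∧ ∃ f : MvPolynomial (Fin n) k,
    f ∈ supported k {j : Fin n | (j : ℕ) < n - d} ∧ f.IsHomogeneous r ∧ f ∉ Jlow d I}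

/-- The partial regularity `reg_t(S/I)`, via its characterization
`reg_t(S/I) = max_i a_z^i(S/I)` for any filter-regular sequence `z` of `t+1` linear forms
([T1, Proposition 2.2]; equal to `max { aᵢ(S/I) + i : i ≤ t }` in terms of local cohomology). -/
def regT (t : ℕ) (I : Ideal (MvPolynomial (Fin n) k)) : WithBot ℕ∞ :=
  sSup {x | ∃ z : Fin (t + 1) → MvPolynomial (Fin n) k,
    (∀ j, (z j).IsHomogeneous 1) ∧ FilterRegular I z ∧
    x = ⨆ i : Fin (t + 1), aInv I z i}

/-- The Castelnuovo–Mumford regularity `reg(S/I)`, via its characterization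
`reg(S/I) = max { a_z^0, …, a_z^{d-1}, r_z(S/I) }` for any filter-regular sequence `z`
of `d = dim S/I` linear forms ([BS, Theorem 1.10], [T1, Corollary 3.3]). -/
def regCM (I : Ideal (MvPolynomial (Fin n) k)) : WithBot ℕ∞ :=
  sSup {x | ∃ d : ℕ, ringKrullDim (MvPolynomial (Fin n) k ⧸ I) = natW d ∧
    ∃ z : Fin d → MvPolynomial (Fin n) k,
      (∀ j, (z j).IsHomogeneous 1) ∧ FilterRegular I z ∧
      x = (⨆ i : Fin d, aInv I z i) ⊔ topDiff ⊤ (I ⊔ Ideal.span (Set.range z))}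

/-- The exponent vectors of the minimal monomial generators of a monomial ideal. -/
def minGens (I : Ideal (MvPolynomial (Fin n) k)) : Set (Fin n →₀ ℕ) :=
  {μ | monomial μ (1 : k) ∈ I ∧
    ∀ ν : Fin n →₀ ℕ, monomial ν (1 : k) ∈ I → ν ≤ μ → ν = μ}

/-- `E_i`: the exponent vectors of the minimal generators of `In(I)` involving none of
the variables `x_{n-i+1}, …, x_n`. -/
def Evar (i : ℕ) (I : Ideal (MvPolynomial (Fin n) k)) : Set (Fin n →₀ ℕ) :=
  {μ ∈ minGens (initialIdeal I) | ∀ j : Fin n, n - i ≤ (j : ℕ) → μ j = 0}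

/-- The set `F` of corners of the staircase determined by `E`:
vectors `a = max(v₁,…,v_s) - (1,…,1)` where `v j ∈ E`, the `j`-th coordinate of `v j`
strictly exceeds that of `v h` for `h ≠ j`, and `a ≱ w` for all `w ∈ E`. -/
def corners {s : ℕ} (E : Set (Fin s →₀ ℕ)) : Set (Fin s →₀ ℕ) :=
  {a | (∃ v : Fin s → (Fin s →₀ ℕ), (∀ j, v j ∈ E) ∧
      (∀ j h : Fin s, h ≠ j → v h j < v j j) ∧
      ∀ l : Fin s, a l + 1 = Finset.univ.sup fun j => v j l) ∧
    ∀ w ∈ E, ¬ w ≤ a}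


lemma degOf_eq_degree {n : ℕ} (a : Fin n →₀ ℕ) : degOf a = Finsupp.degree a := rfl

lemma degOf_eq_weight {n : ℕ} (a : Fin n →₀ ℕ) : degOf a = Finsupp.weight 1 a := by
  rw [degOf_eq_degree, Finsupp.degree_eq_weight_one]; rfl

lemma isHomog_iff {k : Type*} [Field k] {n : ℕ} (f : MvPolynomial (Fin n) k) (r : ℕ) :
    f.IsHomogeneous r ↔ ∀ d, coeff d f ≠ 0 → degOf d = r := by
  constructor
  · intro h d hd; rw [degOf_eq_weight]; exact h hd
  · intro h d hd; rw [← degOf_eq_weight]; exact h d hd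

lemma degOf_add {n : ℕ} (a b : Fin n →₀ ℕ) : degOf (a + b) = degOf a + degOf b := by
  simp only [degOf_eq_weight, map_add]

lemma finite_degOf_eq {n r : ℕ} : {a : Fin n →₀ ℕ | degOf a = r}.Finite :=
  (Finsupp.finite_of_degree_le r).subset
    (fun a ha => by simp only [Set.mem_setOf_eq, ← degOf_eq_degree]; exact le_of_eq ha)

lemma revlex_irrefl {n : ℕ} (a : Fin n →₀ ℕ) : ¬ RevLexLT a a := by
  rintro (h | ⟨-, j, hj, -⟩); omega; omega

lemma revlex_add_right {n : ℕ} {a b : Fin n →₀ ℕ} (c : Fin n →₀ ℕ) (h : RevLexLT a b) :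
    RevLexLT (a + c) (b + c) := by
  rcases h with h | ⟨he, j, hj, hl⟩
  · left; rw [degOf_add, degOf_add]; omega
  · right
    constructor
    · rw [degOf_add, degOf_add]; omega
    · refine ⟨j, ?_, fun l hlt => ?_⟩
      · simp only [Finsupp.add_apply]; omega
      · simp only [Finsupp.add_apply, hl l hlt]

lemma revlex_total {n : ℕ} {a b : Fin n →₀ ℕ} (h : a ≠ b) : RevLexLT a b ∨ RevLexLT b a := by
  rcases Nat.lt_trichotomy (degOf a) (degOf b) with hd | hd | hd
  · exact Or.inl (Or.inl hd)
  · have hne : ∃ j : Fin n, a j ≠ b j := by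
      by_contra hc; push_neg at hc; exact h (Finsupp.ext hc)
    classical
    let s : Finset (Fin n) := Finset.univ.filter (fun j => a j ≠ b j)
    have hs : s.Nonempty := by
      obtain ⟨j, hj⟩ := hne; exact ⟨j, by simp [s, hj]⟩
    obtain ⟨j, hjs, hmax⟩ := s.exists_max_image (fun x => x) hs
    have hjne : a j ≠ b j := by simpa [s] using hjs
    have heq : ∀ l : Fin n, j < l → a l = b l := by
      intro l hl
      by_contra hne'
      have : l ∈ s := by simp [s, hne']
      exact absurd (hmax l this) (by simpa using hl)
    rcases Nat.lt_or_ge (a j) (b j) with hj | hj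
    · exact Or.inr (Or.inr ⟨hd.symm, j, hj, fun l hl => (heq l hl).symm⟩)
    · exact Or.inl (Or.inr ⟨hd, j, lt_of_le_of_ne hj (Ne.symm hjne), heq⟩)
  · exact Or.inr (Or.inl hd)

lemma revlex_trans {n : ℕ} {a b c : Fin n →₀ ℕ} (h1 : RevLexLT a b) (h2 : RevLexLT b c) :
    RevLexLT a c := by
  rcases h1 with h1 | ⟨e1, j1, hj1, hl1⟩
  · rcases h2 with h2 | ⟨e2, -⟩
    · exact Or.inl (h1.trans h2)
    · exact Or.inl (e2 ▸ h1)
  · rcases h2 with h2 | ⟨e2, j2, hj2, hl2⟩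
    · exact Or.inl (e1 ▸ h2)
    · right
      refine ⟨e1.trans e2, ?_⟩
      rcases lt_trichotomy j1 j2 with hj | hj | hj
      · exact ⟨j2, by rw [hl1 j2 hj]; exact hj2,
          fun l hl => (hl1 l (hj.trans hl)).trans (hl2 l hl)⟩
      · subst hj; exact ⟨j1, hj2.trans hj1, fun l hl => (hl1 l hl).trans (hl2 l hl)⟩
      · exact ⟨j1, by rw [hl2 j1 hj] at hj1; exact hj1,
          fun l hl => (hl1 l hl).trans (hl2 l (hj.trans hl))⟩

lemma revlex_max {n : ℕ} (s : Finset (Fin n →₀ ℕ)) (hs : s.Nonempty) :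
    ∃ μ ∈ s, ∀ ν ∈ s, ν = μ ∨ RevLexLT ν μ := by
  induction hs using Finset.Nonempty.cons_induction with
  | singleton a => exact ⟨a, by simp⟩
  | cons a s ha hs IH =>
    obtain ⟨μ, hμs, hmax⟩ := IH
    have hne : a ≠ μ := fun h => ha (h ▸ hμs)
    rcases revlex_total hne with h | h
    · refine ⟨μ, Finset.mem_cons_of_mem hμs, fun ν hν => ?_⟩
      rcases Finset.mem_cons.mp hν with rfl | hν
      · exact Or.inr h
      · exact hmax ν hν
    · refine ⟨a, Finset.mem_cons_self a s, fun ν hν => ?_⟩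
      rcases Finset.mem_cons.mp hν with rfl | hν
      · exact Or.inl rfl
      · rcases hmax ν hν with rfl | h2
        · exact Or.inr h
        · exact Or.inr (revlex_trans h2 h)

/-- membership in a span of monomials -/
lemma mem_span_monomials {k : Type*} [Field k] {n : ℕ} {G : Set (MvPolynomial (Fin n) k)}
    (hG : ∀ g ∈ G, ∃ μ, ∃ c : k, g = monomial μ c) {f : MvPolynomial (Fin n) k}
    (hf : f ∈ Ideal.span G) :
    ∀ ν ∈ f.support, ∃ μ, (∃ c : k, c ≠ 0 ∧ monomial μ c ∈ G) ∧ μ ≤ ν := by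
  refine Submodule.span_induction ?_ ?_ ?_ ?_ hf
  · intro g hg ν hν
    obtain ⟨μ, c, rfl⟩ := hG g hg
    rcases Finset.mem_singleton.mp (Finset.mem_of_subset support_monomial_subset hν) with rfl
    refine ⟨ν, ⟨c, ?_, hg⟩, le_rfl⟩
    intro hc; subst hc; simp at hν
  · intro ν hν; simp at hν
  · intro x y _ _ hx hy ν hν
    rcases Finset.mem_union.mp (Finset.mem_of_subset (support_add) hν) with h | h
    · exact hx ν h
    · exact hy ν h
  · intro r x _ hx ν hν
    have := Finset.mem_of_subset (support_mul r x) hν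
    rw [Finset.mem_add] at this
    obtain ⟨a, _, b, hb, rfl⟩ := this
    obtain ⟨μ, hμ, hle⟩ := hx b hb
    exact ⟨μ, hμ, hle.trans (le_add_self)⟩

section Main
variable {k : Type*} [Field k] {n : ℕ}

/-- The variables `x_{n-d+1}, …, x_n`. -/
def zvarSet (k : Type*) [Field k] (n d : ℕ) : Set (MvPolynomial (Fin n) k) :=
  X '' {j : Fin n | n - d ≤ (j : ℕ)}

/-- An exponent vector free of the last `d` variables. -/
def FreeExp (n d : ℕ) (ν : Fin n →₀ ℕ) : Prop := ∀ j : Fin n, n - d ≤ (j : ℕ) → ν j = 0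

lemma revlex_dominate {n d : ℕ} {a b : Fin n →₀ ℕ} (hdeg : degOf a = degOf b)
    (ha : FreeExp n d a) (hb : ¬ FreeExp n d b) : RevLexLT b a := by
  classical
  unfold FreeExp at hb
  push_neg at hb
  obtain ⟨j0, hj0, hbj0⟩ := hb
  let s : Finset (Fin n) := Finset.univ.filter (fun j => n - d ≤ (j : ℕ) ∧ b j ≠ 0)
  have hs : s.Nonempty := ⟨j0, by simp only [s, Finset.mem_filter, Finset.mem_univ, true_and]; exact ⟨hj0, hbj0⟩⟩
  obtain ⟨j, hjs, hmax⟩ := s.exists_max_image (fun x => x) hs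
  obtain ⟨hjd, hbj⟩ : n - d ≤ (j : ℕ) ∧ b j ≠ 0 := by simpa [s] using hjs
  right
  refine ⟨hdeg.symm, j, ?_, fun l hl => ?_⟩
  · rw [ha j hjd]; exact Nat.pos_of_ne_zero hbj
  · have hld : n - d ≤ (l : ℕ) := le_trans hjd (le_of_lt hl)
    rw [ha l hld]
    by_contra hbl
    have : l ∈ s := by simp only [s, Finset.mem_filter, Finset.mem_univ, true_and]; exact ⟨hld, hbl⟩
    exact absurd (hmax l this) (by simpa using hl)

lemma monomial_mem_zspan {d : ℕ} {ν : Fin n →₀ ℕ} (c : k) {j : Fin n}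
    (hj : n - d ≤ (j : ℕ)) (hν : ν j ≠ 0) :
    monomial ν c ∈ Ideal.span (zvarSet k n d) := by
  have hle : Finsupp.single j 1 ≤ ν := Finsupp.single_le_iff.mpr (Nat.one_le_iff_ne_zero.mpr hν)
  have : monomial ν c = monomial (ν - Finsupp.single j 1) c * X j := by
    rw [X, monomial_mul, mul_one, tsub_add_cancel_of_le hle]
  rw [this]
  exact Ideal.mul_mem_left _ _ (Ideal.subset_span ⟨j, hj, rfl⟩)

lemma zspan_monomials {d : ℕ} : ∀ g ∈ zvarSet k n d,
    ∃ μ, ∃ c : k, g = monomial μ c := by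
  rintro g ⟨j, -, rfl⟩
  exact ⟨Finsupp.single j 1, 1, rfl⟩

lemma mem_zspan_nonfree {d : ℕ} {f : MvPolynomial (Fin n) k}
    (hf : f ∈ Ideal.span (zvarSet k n d)) :
    ∀ ν ∈ f.support, ¬ FreeExp n d ν := by
  intro ν hν hfree
  obtain ⟨μ, ⟨c, hc, hmem⟩, hle⟩ := mem_span_monomials zspan_monomials hf ν hν
  obtain ⟨j, hj, hXj⟩ := hmem
  rcases (monomial_eq_monomial_iff _ _ _ _).mp hXj.symm with ⟨rfl, -⟩ | ⟨-, h1⟩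
  · have h1 : (1 : ℕ) ≤ ν j := by
      have := hle; rw [Finsupp.single_le_iff] at this; exact this
    rw [hfree j hj] at h1; omega
  · exact one_ne_zero h1

lemma coeff_eq_zero_of_zspan {d : ℕ} {f : MvPolynomial (Fin n) k}
    (hf : f ∈ Ideal.span (zvarSet k n d)) {ν : Fin n →₀ ℕ} (hν : FreeExp n d ν) :
    coeff ν f = 0 := by
  by_contra h
  exact mem_zspan_nonfree hf ν (mem_support_iff.mpr h) hν

lemma mem_zspan_of_all_nonfree {d : ℕ} {f : MvPolynomial (Fin n) k}
    (hf : ∀ ν ∈ f.support, ¬ FreeExp n d ν) :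
    f ∈ Ideal.span (zvarSet k n d) := by
  classical
  rw [as_sum f]
  refine Ideal.sum_mem _ (fun ν hν => ?_)
  have := hf ν hν
  unfold FreeExp at this
  push_neg at this
  obtain ⟨j, hj, hνj⟩ := this
  exact monomial_mem_zspan _ hj hνj

/-- The part of `f` supported on monomials free of the last `d` variables. -/
def freePart (d : ℕ) (f : MvPolynomial (Fin n) k) : MvPolynomial (Fin n) k :=
  haveI := Classical.decPred (FreeExp n d)
  AddMonoidAlgebra.ofCoeff (Finsupp.filter (FreeExp n d) (AddMonoidAlgebra.coeff f))

lemma coeff_freePart_pos {d : ℕ} (f : MvPolynomial (Fin n) k) {ν : Fin n →₀ ℕ}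
    (h : FreeExp n d ν) : coeff ν (freePart d f) = coeff ν f := by
  exact @Finsupp.filter_apply_pos (Fin n →₀ ℕ) k _ _ (Classical.decPred _) (AddMonoidAlgebra.coeff f) ν h

lemma coeff_freePart_neg {d : ℕ} (f : MvPolynomial (Fin n) k) {ν : Fin n →₀ ℕ}
    (h : ¬ FreeExp n d ν) : coeff ν (freePart d f) = 0 := by
  exact @Finsupp.filter_apply_neg (Fin n →₀ ℕ) k _ _ (Classical.decPred _) (AddMonoidAlgebra.coeff f) ν h

lemma sub_freePart_mem_zspan (d : ℕ) (f : MvPolynomial (Fin n) k) :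
    f - freePart d f ∈ Ideal.span (zvarSet k n d) := by
  refine mem_zspan_of_all_nonfree (fun ν hν hfree => ?_)
  rw [mem_support_iff, coeff_sub, coeff_freePart_pos _ hfree, sub_self] at hν
  exact hν rfl

lemma freePart_mem_supported (d : ℕ) (f : MvPolynomial (Fin n) k) :
    freePart d f ∈ supported k {j : Fin n | (j : ℕ) < n - d} := by
  rw [mem_supported]
  intro j hj
  simp only [Finset.coe_sort_coe, Set.mem_setOf_eq]
  obtain ⟨ν, hν, hjν⟩ := (mem_vars j).mp hj
  have hfree : FreeExp n d ν := by
    by_contra h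
    rw [mem_support_iff, coeff_freePart_neg _ h] at hν
    exact hν rfl
  by_contra h
  push_neg at h
  exact (Finsupp.mem_support_iff.mp hjν) (hfree j h)

lemma freePart_isHomogeneous {d r : ℕ} {f : MvPolynomial (Fin n) k}
    (hf : f.IsHomogeneous r) : (freePart d f).IsHomogeneous r := by
  rw [isHomog_iff] at hf ⊢
  intro ν hν
  by_cases h : FreeExp n d ν
  · rw [coeff_freePart_pos _ h] at hν
    exact hf ν hν
  · rw [coeff_freePart_neg _ h] at hν
    exact absurd rfl hν

lemma supported_coeff_zero {d : ℕ} {f : MvPolynomial (Fin n) k}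
    (hf : f ∈ supported k {j : Fin n | (j : ℕ) < n - d}) {ν : Fin n →₀ ℕ}
    (hν : ν ∈ f.support) : FreeExp n d ν := by
  intro j hj
  by_contra h
  have hjv : j ∈ f.vars := (mem_vars j).mpr ⟨ν, hν, Finsupp.mem_support_iff.mpr h⟩
  have := (mem_supported.mp hf) hjv
  simp only [Set.mem_setOf_eq] at this
  omega


end Main


section Main2
variable {k : Type*} [Field k] {n : ℕ}

lemma evalZero_monomial_free {d : ℕ} {ν : Fin n →₀ ℕ} (c : k) (h : FreeExp n d ν) :
    evalZero k n d (monomial ν c) = monomial ν c := by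
  rw [evalZero, aeval_monomial, monomial_eq]
  congr 1
  refine Finsupp.prod_congr (fun j hj => ?_)
  rw [if_pos]
  by_contra hc
  push_neg at hc
  exact (Finsupp.mem_support_iff.mp hj) (h j hc)

lemma evalZero_monomial_nonfree {d : ℕ} {ν : Fin n →₀ ℕ} (c : k) (h : ¬ FreeExp n d ν) :
    evalZero k n d (monomial ν c) = 0 := by
  unfold FreeExp at h
  push_neg at h
  obtain ⟨j, hj, hνj⟩ := h
  rw [evalZero, aeval_monomial]
  have : (ν.prod fun i e => (if (i : ℕ) < n - d then (X i : MvPolynomial (Fin n) k) else 0) ^ e) = 0 := by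
    rw [Finsupp.prod]
    refine Finset.prod_eq_zero (Finsupp.mem_support_iff.mpr hνj) ?_
    rw [if_neg (by omega), zero_pow hνj]
  rw [this, mul_zero]

lemma evalZero_supported {d : ℕ} {f : MvPolynomial (Fin n) k}
    (hf : f ∈ supported k {j : Fin n | (j : ℕ) < n - d}) :
    evalZero k n d f = f := by
  conv_lhs => rw [as_sum f]
  rw [map_sum]
  conv_rhs => rw [as_sum f]
  refine Finset.sum_congr rfl (fun ν hν => ?_)
  exact evalZero_monomial_free _ (supported_coeff_zero hf hν)

lemma initialIdeal_gens_monomials (I : Ideal (MvPolynomial (Fin n) k)) :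
    ∀ g ∈ {g | ∃ f ∈ I, f ≠ 0 ∧ ∃ μ ∈ f.support,
      (∀ ν ∈ f.support, ν = μ ∨ RevLexLT ν μ) ∧ g = monomial μ (1 : k)},
      ∃ μ, ∃ c : k, g = monomial μ c := by
  rintro g ⟨f, -, -, μ, -, -, rfl⟩
  exact ⟨μ, 1, rfl⟩

lemma Jlow_le_initialIdeal {d : ℕ} (I : Ideal (MvPolynomial (Fin n) k)) :
    Jlow d I ≤ initialIdeal I := by
  rw [Jlow, initialIdeal, Ideal.map_span]
  refine Ideal.span_le.mpr ?_
  rintro g ⟨g', hg', rfl⟩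
  by_cases hfree : ∃ μ c, g' = monomial μ c ∧ FreeExp n d μ
  · obtain ⟨μ, c, rfl, hf⟩ := hfree
    rw [evalZero_monomial_free _ hf]
    exact Ideal.subset_span hg'
  · obtain ⟨μ, c, rfl⟩ := initialIdeal_gens_monomials I g' hg'
    push_neg at hfree
    rw [evalZero_monomial_nonfree _ (hfree μ c rfl)]
    exact Ideal.zero_mem _

lemma mem_Jlow_of_supported {d : ℕ} {I : Ideal (MvPolynomial (Fin n) k)}
    {f : MvPolynomial (Fin n) k}
    (hsup : f ∈ supported k {j : Fin n | (j : ℕ) < n - d})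
    (hf : f ∈ initialIdeal I ⊔ Ideal.span (zvarSet k n d)) :
    f ∈ Jlow d I := by
  rw [Submodule.mem_sup] at hf
  obtain ⟨m, hm, h, hh, rfl⟩ := hf
  have h1 : evalZero k n d (m + h) = m + h := evalZero_supported hsup
  have h2 : evalZero k n d h = 0 := by
    have : evalZero k n d h ∈ Ideal.map (evalZero k n d) (Ideal.span (zvarSet k n d)) :=
      Ideal.mem_map_of_mem _ hh
    rw [Ideal.map_span] at this
    have hz : (evalZero k n d) '' (zvarSet k n d) ⊆ {0} := by
      rintro x ⟨y, ⟨j, hj, rfl⟩, rfl⟩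
      simp only [Set.mem_singleton_iff, evalZero, aeval_X]
      rw [if_neg (by simp only [Set.mem_setOf_eq] at hj; omega)]
    have : evalZero k n d h ∈ Ideal.span ({0} : Set (MvPolynomial (Fin n) k)) :=
      Ideal.span_mono hz this
    simpa [Ideal.span_singleton_eq_bot.mpr rfl] using this
  have h3 : evalZero k n d m ∈ Jlow d I := Ideal.mem_map_of_mem _ hm
  rw [map_add, h2, add_zero] at h1
  rw [← h1]
  exact h3

end Main2

section Main3
variable {k : Type*} [Field k] {n : ℕ}

lemma initialIdeal_sup_eq (I : Ideal (MvPolynomial (Fin n) k)) (d : ℕ) :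
    initialIdeal I ⊔ Ideal.span (zvarSet k n d) =
      Ideal.span ({g | ∃ f ∈ I, f ≠ 0 ∧ ∃ μ ∈ f.support,
        (∀ ν ∈ f.support, ν = μ ∨ RevLexLT ν μ) ∧ g = monomial μ (1 : k)} ∪ zvarSet k n d) := by
  rw [Ideal.span_union, initialIdeal]

lemma homog_mem_of_monos {r : ℕ} (P : Ideal (MvPolynomial (Fin n) k))
    (hmono : ∀ μ : Fin n →₀ ℕ, degOf μ = r → monomial μ (1 : k) ∈ P)
    {f : MvPolynomial (Fin n) k} (hf : f.IsHomogeneous r) : f ∈ P := by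
  rw [as_sum f]
  refine Ideal.sum_mem _ (fun ν hν => ?_)
  have hdeg : degOf ν = r := (isHomog_iff f r).mp hf ν (mem_support_iff.mp hν)
  have : monomial ν (coeff ν f) = C (coeff ν f) * monomial ν (1 : k) := by
    rw [C_mul_monomial, mul_one]
  rw [this]
  exact Ideal.mul_mem_left _ _ (hmono ν hdeg)

lemma mono_PQ {d r : ℕ} {I : Ideal (MvPolynomial (Fin n) k)} (hI : HomogIdeal I)
    {μ : Fin n →₀ ℕ} (hμ : degOf μ = r)
    (hmem : monomial μ (1 : k) ∈ I ⊔ Ideal.span (zvarSet k n d)) :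
    monomial μ (1 : k) ∈ initialIdeal I ⊔ Ideal.span (zvarSet k n d) := by
  by_cases hfree : FreeExp n d μ
  · rw [Submodule.mem_sup] at hmem
    obtain ⟨g, hg, h, hh, heq⟩ := hmem
    have hcμh : coeff μ h = 0 := coeff_eq_zero_of_zspan hh hfree
    have hcμg : coeff μ g = 1 := by
      have := congrArg (coeff μ) heq
      rw [coeff_add, hcμh, add_zero, coeff_monomial, if_pos rfl] at this
      exact this
    set g' := homogeneousComponent r g with hg'
    have hg'I : g' ∈ I := hI g hg r
    have hcoeff : ∀ ν, coeff ν g' = if degOf ν = r then coeff ν g else 0 := by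
      intro ν; rw [hg', coeff_homogeneousComponent, degOf_eq_degree]
    have hcμg' : coeff μ g' = 1 := by rw [hcoeff, if_pos hμ, hcμg]
    have hμs : μ ∈ g'.support := mem_support_iff.mpr (by rw [hcμg']; exact one_ne_zero)
    have hmax : ∀ ν ∈ g'.support, ν = μ ∨ RevLexLT ν μ := by
      intro ν hν
      by_cases hνμ : ν = μ
      · exact Or.inl hνμ
      · have hcν : coeff ν g' ≠ 0 := mem_support_iff.mp hν
        have hdν : degOf ν = r := by
          by_contra hc; rw [hcoeff, if_neg hc] at hcν; exact hcν rfl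
        have hcνg : coeff ν g ≠ 0 := by rw [hcoeff, if_pos hdν] at hcν; exact hcν
        by_cases hνfree : FreeExp n d ν
        · exfalso
          have := congrArg (coeff ν) heq
          rw [coeff_add, coeff_eq_zero_of_zspan hh hνfree, add_zero,
            coeff_monomial, if_neg (fun h' => hνμ h'.symm)] at this
          exact hcνg this
        · exact Or.inr (revlex_dominate (by omega) hfree hνfree)
    refine Submodule.mem_sup_left (Ideal.subset_span ?_)
    exact ⟨g', hg'I, fun h0 => by simp [h0] at hcμg', μ, hμs, hmax, rfl⟩
  · unfold FreeExp at hfree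
    push_neg at hfree
    obtain ⟨j, hj, hμj⟩ := hfree
    exact Submodule.mem_sup_right (monomial_mem_zspan _ hj hμj)

lemma mono_QP {d r : ℕ} {I : Ideal (MvPolynomial (Fin n) k)} (hI : HomogIdeal I)
    (hall : ∀ μ : Fin n →₀ ℕ, degOf μ = r →
      monomial μ (1 : k) ∈ initialIdeal I ⊔ Ideal.span (zvarSet k n d)) :
    ∀ μ : Fin n →₀ ℕ, degOf μ = r → monomial μ (1 : k) ∈ I ⊔ Ideal.span (zvarSet k n d) := by
  suffices H : ∀ N : ℕ, ∀ μ : Fin n →₀ ℕ, degOf μ = r →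
      {ν | degOf ν = r ∧ RevLexLT ν μ}.ncard < N →
      monomial μ (1 : k) ∈ I ⊔ Ideal.span (zvarSet k n d) by
    intro μ hμ; exact H _ μ hμ (Nat.lt_succ_self _)
  classical
  intro N
  induction N with
  | zero => intro μ _ hcard; exact absurd hcard (Nat.not_lt_zero _)
  | succ N IH =>
    intro μ hμ hcard
    have hμspan := hall μ hμ
    rw [initialIdeal_sup_eq] at hμspan
    have hGmono : ∀ g ∈ ({g | ∃ f ∈ I, f ≠ 0 ∧ ∃ μ ∈ f.support,
        (∀ ν ∈ f.support, ν = μ ∨ RevLexLT ν μ) ∧ g = monomial μ (1 : k)} ∪ zvarSet k n d),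
        ∃ μ, ∃ c : k, g = monomial μ c := by
      rintro g (hg | hg)
      · exact initialIdeal_gens_monomials I g hg
      · exact zspan_monomials g hg
    have hμsup : μ ∈ (monomial μ (1 : k)).support := by
      rw [support_monomial, if_neg (one_ne_zero)]; exact Finset.mem_singleton_self μ
    obtain ⟨ρ, ⟨c, hc, hmem⟩, hle⟩ := mem_span_monomials hGmono hμspan μ hμsup
    rcases hmem with hG | hz
    · -- generator from the initial ideal
      obtain ⟨f, hfI, hf0, ρ', hρ's, hmax, heq⟩ := hG
      rcases (monomial_eq_monomial_iff _ _ _ _).mp heq with ⟨rfl, -⟩ | ⟨-, h10⟩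
      swap
      · exact absurd h10 one_ne_zero
      have hρf : coeff ρ f ≠ 0 := mem_support_iff.mp hρ's
      set t := degOf ρ with ht
      set g' := homogeneousComponent t f with hg'
      have hg'I : g' ∈ I := hI f hfI t
      have hcoeffg' : ∀ ν, coeff ν g' = if degOf ν = t then coeff ν f else 0 := by
        intro ν; rw [hg', coeff_homogeneousComponent, degOf_eq_degree]
      have hcρg' : coeff ρ g' = coeff ρ f := by rw [hcoeffg', if_pos rfl]
      set h := monomial (μ - ρ) (1 : k) * g' with hhdef
      have hhI : h ∈ I := Ideal.mul_mem_left _ _ hg'I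
      have hcoeffh : ∀ ν, coeff ν h =
          if μ - ρ ≤ ν then coeff (ν - (μ - ρ)) g' else 0 := by
        intro ν; rw [hhdef, coeff_monomial_mul']
        split_ifs <;> simp
      have hcancel : μ - ρ + ρ = μ := tsub_add_cancel_of_le hle
      have hdegsplit : degOf (μ - ρ) + t = r := by
        have := degOf_add (μ - ρ) ρ
        rw [hcancel] at this
        omega
      have hhhomog : h.IsHomogeneous r := by
        have h1 : (monomial (μ - ρ) (1 : k)).IsHomogeneous (degOf (μ - ρ)) :=
          isHomogeneous_monomial _ rfl
        have h2 : g'.IsHomogeneous t := homogeneousComponent_isHomogeneous t f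
        have := h1.mul h2
        rwa [hdegsplit] at this
      have hcμh : coeff μ h = coeff ρ f := by
        rw [hcoeffh, if_pos tsub_le_self, tsub_tsub_cancel_of_le hle, hcρg']
      have key : ∀ ν ∈ h.support, ν ≠ μ → degOf ν = r ∧ RevLexLT ν μ := by
        intro ν hν hνμ
        have hcν : coeff ν h ≠ 0 := mem_support_iff.mp hν
        have hdν : degOf ν = r := (isHomog_iff h r).mp hhhomog ν hcν
        refine ⟨hdν, ?_⟩
        have hleν : μ - ρ ≤ ν := by
          by_contra hcon; rw [hcoeffh, if_neg hcon] at hcν; exact hcν rfl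
        have hcν' : coeff (ν - (μ - ρ)) g' ≠ 0 := by
          rw [hcoeffh, if_pos hleν] at hcν; exact hcν
        have hcνf : coeff (ν - (μ - ρ)) f ≠ 0 := by
          by_contra hcon
          rw [hcoeffg'] at hcν'
          split_ifs at hcν' <;> [exact hcν' hcon; exact hcν' rfl]
        have hcancelν : ν - (μ - ρ) + (μ - ρ) = ν := tsub_add_cancel_of_le hleν
        rcases hmax _ (mem_support_iff.mpr hcνf) with hee | hrl
        · exfalso
          apply hνμ
          rw [← hcancelν, hee, add_comm, hcancel]
        · have := revlex_add_right (μ - ρ) hrl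
          rwa [hcancelν, add_comm ρ, hcancel] at this
      -- split off the leading term
      have hsplit : monomial μ (coeff μ h) = h - ∑ ν ∈ h.support.erase μ, monomial ν (coeff ν h) := by
        have hμh : μ ∈ h.support := mem_support_iff.mpr (by rw [hcμh]; exact hρf)
        have := Finset.add_sum_erase h.support (fun ν => monomial ν (coeff ν h)) hμh
        rw [← as_sum h] at this
        rw [eq_sub_iff_add_eq, this]
      have hrest : ∀ ν ∈ h.support.erase μ,
          monomial ν (coeff ν h) ∈ I ⊔ Ideal.span (zvarSet k n d) := by
        intro ν hν
        obtain ⟨hνμ, hνs⟩ := Finset.mem_erase.mp hν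
        obtain ⟨hdν, hrl⟩ := key ν hνs hνμ
        have hssub : {ν' | degOf ν' = r ∧ RevLexLT ν' ν} ⊂ {ν' | degOf ν' = r ∧ RevLexLT ν' μ} := by
          constructor
          · rintro x ⟨hx1, hx2⟩; exact ⟨hx1, revlex_trans hx2 hrl⟩
          · intro hcon
            have : ν ∈ {ν' | degOf ν' = r ∧ RevLexLT ν' ν} := hcon ⟨hdν, hrl⟩
            exact revlex_irrefl ν this.2
        have hfin : {ν' | degOf ν' = r ∧ RevLexLT ν' μ}.Finite :=
          finite_degOf_eq.subset (fun x hx => hx.1)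
        have hlt : {ν' | degOf ν' = r ∧ RevLexLT ν' ν}.ncard <
            {ν' | degOf ν' = r ∧ RevLexLT ν' μ}.ncard := Set.ncard_lt_ncard hssub hfin
        have hmem' := IH ν hdν (by omega)
        have : monomial ν (coeff ν h) = C (coeff ν h) * monomial ν (1 : k) := by
          rw [C_mul_monomial, mul_one]
        rw [this]
        exact Ideal.mul_mem_left _ _ hmem'
      have hμc : monomial μ (coeff μ h) ∈ I ⊔ Ideal.span (zvarSet k n d) := by
        rw [hsplit]
        exact Submodule.sub_mem _ (Submodule.mem_sup_left hhI)
          (Ideal.sum_mem _ hrest)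
      have hfinal : monomial μ (1 : k) = C (coeff μ h)⁻¹ * monomial μ (coeff μ h) := by
        rw [C_mul_monomial, inv_mul_cancel₀ (by rw [hcμh]; exact hρf)]
      rw [hfinal]
      exact Ideal.mul_mem_left _ _ hμc
    · -- generator is one of the last variables
      obtain ⟨j, hj, hXj⟩ := hz
      rcases (monomial_eq_monomial_iff _ _ _ _).mp hXj.symm with ⟨rfl, -⟩ | ⟨-, h10⟩
      · have h1 : (1 : ℕ) ≤ μ j := Finsupp.single_le_iff.mp hle
        exact Submodule.mem_sup_right (monomial_mem_zspan _ hj (by omega))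
      · exact absurd h10 one_ne_zero

end Main3

section Main4
variable {k : Type*} [Field k] {n : ℕ}

lemma allEquiv {d r : ℕ} (I : Ideal (MvPolynomial (Fin n) k)) (hI : HomogIdeal I) :
    (∀ f : MvPolynomial (Fin n) k, f.IsHomogeneous r → f ∈ I ⊔ Ideal.span (zvarSet k n d)) ↔
    (∀ f : MvPolynomial (Fin n) k, f ∈ supported k {j : Fin n | (j : ℕ) < n - d} →
      f.IsHomogeneous r → f ∈ Jlow d I) := by
  constructor
  · intro hA f hsup hhom
    refine mem_Jlow_of_supported hsup ?_
    refine homog_mem_of_monos _ (fun μ hμ => ?_) hhom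
    have hmono : (monomial μ (1 : k)).IsHomogeneous r :=
      isHomogeneous_monomial _ (by rw [← degOf_eq_degree]; exact hμ)
    exact mono_PQ hI hμ (hA _ hmono)
  · intro hB f hhom
    refine homog_mem_of_monos _ (mono_QP hI (fun μ hμ => ?_)) hhom
    by_cases hfree : FreeExp n d μ
    · have hsup : monomial μ (1 : k) ∈ supported k {j : Fin n | (j : ℕ) < n - d} := by
        rw [mem_supported, vars_monomial one_ne_zero]
        intro j hj
        simp only [Finset.coe_sort_coe, Set.mem_setOf_eq]
        by_contra hc
        push_neg at hc
        exact (Finsupp.mem_support_iff.mp hj) (hfree j hc)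
      have hmono : (monomial μ (1 : k)).IsHomogeneous r :=
        isHomogeneous_monomial _ (by rw [← degOf_eq_degree]; exact hμ)
      exact Submodule.mem_sup_left (Jlow_le_initialIdeal I (hB _ hsup hmono))
    · unfold FreeExp at hfree
      push_neg at hfree
      obtain ⟨j, hj, hμj⟩ := hfree
      exact Submodule.mem_sup_right (monomial_mem_zspan _ hj hμj)

end Main4

section Main5
variable {k : Type*} [Field k] {n : ℕ}

lemma fin_aux_lt {d : ℕ} (hn : 0 < n) (j : Fin d) : n - 1 - (j : ℕ) < n := by omega

theorem stmt_8' (I : Ideal (MvPolynomial (Fin n) k))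
    (hI : HomogIdeal I) (d : ℕ) (hn : 0 < n) (hdn : d ≤ n) :
    topDiff ⊤ (partIdeal I (fun j : Fin d =>
        (X ⟨n - 1 - (j : ℕ), fin_aux_lt hn j⟩ : MvPolynomial (Fin n) k)) d)
      = rInv d I := by
  set z : Fin d → MvPolynomial (Fin n) k :=
    fun j : Fin d => (X ⟨n - 1 - (j : ℕ), by omega⟩ : MvPolynomial (Fin n) k) with hz
  have hzr : z '' {j : Fin d | (j : ℕ) < d} = zvarSet k n d := by
    ext g
    constructor
    · rintro ⟨j, -, rfl⟩
      exact ⟨⟨n - 1 - (j : ℕ), by omega⟩, by simp only [Set.mem_setOf_eq]; omega, rfl⟩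
    · rintro ⟨l, hl, rfl⟩
      simp only [Set.mem_setOf_eq] at hl
      have hld : (l : ℕ) < n := l.isLt
      refine ⟨⟨n - 1 - (l : ℕ), by omega⟩, by simp only [Set.mem_setOf_eq]; omega, ?_⟩
      simp only [hz]
      congr 1
      apply Fin.ext
      simp only []
      omega
  have hPI : partIdeal I z d = I ⊔ Ideal.span (zvarSet k n d) := by
    rw [partIdeal, hzr]
  rw [topDiff, rInv, hPI]
  congr 1
  ext x
  simp only [Set.mem_setOf_eq]
  constructor
  · rintro ⟨r, hr, hne⟩
    refine ⟨r, hr, ?_⟩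
    by_contra hcon
    push_neg at hcon
    apply hne
    intro f hf
    simp only [Submodule.mem_top, true_iff]
    refine ((allEquiv I hI).mpr ?_) f hf
    intro g hg1 hg2
    exact hcon g hg1 hg2
  · rintro ⟨r, hr, f, hf1, hf2, hf3⟩
    refine ⟨r, hr, ?_⟩
    intro hcon
    have hall : ∀ g : MvPolynomial (Fin n) k, g.IsHomogeneous r →
        g ∈ I ⊔ Ideal.span (zvarSet k n d) := by
      intro g hg
      have := hcon g hg
      simpa using this.mp (by trivial)
    exact hf3 (((allEquiv I hI).mp hall) f hf1 hf2)

end Main5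

/-- Lemma 3.5: if `c_i(I) < ∞` for `i = 0, …, d-1`, then the reduction
number of `S/I` with respect to `z = xₙ, …, x_{n-d+1}`, i.e. the top nonvanishing degree of
`S/(I, xₙ, …, x_{n-d+1})`, equals `r(I)`, the top nonvanishing degree of `S_d/J_d`. -/
theorem stmt_8 {k : Type*} [Field k] {n : ℕ} (I : Ideal (MvPolynomial (Fin n) k))
    (hI : HomogIdeal I) (d : ℕ) (hn : 0 < n) (hdn : d ≤ n)
    (hd : ringKrullDim (MvPolynomial (Fin n) k ⧸ I) = natW d)
    (hc : ∀ i : ℕ, i < d → cInv i I < ⊤) :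
    topDiff ⊤ (partIdeal I (fun j : Fin d =>
        (X ⟨n - 1 - (j : ℕ), by omega⟩ : MvPolynomial (Fin n) k)) d)
      = rInv d I := stmt_8' I hI d hn hdn
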